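/- For every real ε with 0 ≤ ε < 1/10 there exists a positive real constant c such that for every k ∈ ℕ, the iterated point–line construction satisfies δ_k ≥ c · n_k^{ε}. -/

import Mathlib

noncomputable section

/-- Points of the real plane. -/
abbrev Pt := ℝ × ℝ

/-- Lines are affine subspaces of the plane (we restrict to 1-dimensional ones via `IsLine`). -/
abbrev Ln := AffineSubspace ℝ Pt

/-- A line is a 1-dimensional affine subspace of `ℝ²`. -/
def IsLine (l : Ln) : Prop := Module.finrank ℝ l.direction = 1

/-- The line through two (distinct) points. -/
def lineThrough (p q : Pt) : Ln := affineSpan ℝ {p, q}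

/-- The iterated point–line construction: `P 1` is a set of four points in general position,
`L 1` is the set of lines through pairs of them; `P (k+1)` adds all intersection points of
pairs of distinct lines of `L k`, and `L (k+1)` adds all lines through pairs of distinct
points of `P (k+1)`.  No two distinct lines of any `L k` are parallel. -/
structure IterConfig where
  P : ℕ → Set Pt
  L : ℕ → Set Ln
  card_P1 : (P 1).ncard = 4
  genPos : ∀ p ∈ P 1, ∀ q ∈ P 1, ∀ r ∈ P 1,
    p ≠ q → p ≠ r → q ≠ r → ¬ Collinear ℝ ({p, q, r} : Set Pt)
  L1_def : L 1 = {l | ∃ p ∈ P 1, ∃ q ∈ P 1, p ≠ q ∧ l = lineThrough p q}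
  P_succ : ∀ k, 1 ≤ k →
    P (k + 1) = P k ∪ {x | ∃ l ∈ L k, ∃ l' ∈ L k, l ≠ l' ∧ x ∈ l ∧ x ∈ l'}
  L_succ : ∀ k, 1 ≤ k →
    L (k + 1) = L k ∪ {l | ∃ p ∈ P (k + 1), ∃ q ∈ P (k + 1), p ≠ q ∧ l = lineThrough p q}
  noParallel : ∀ k, 1 ≤ k → ∀ l ∈ L k, ∀ l' ∈ L k, l ≠ l' →
    AffineSubspace.direction l ≠ AffineSubspace.direction l'

/-- `n k`, the number of points at the beginning of stage `k`. -/
def nPts (C : IterConfig) (k : ℕ) : ℕ := (C.P k).ncard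

/-- `m k`, the number of lines at the beginning of stage `k`. -/
def nLns (C : IterConfig) (k : ℕ) : ℕ := (C.L k).ncard

/-- `d k p`, the degree of a point: the number of lines of `L k` incident to `p`. -/
def ptDeg (C : IterConfig) (k : ℕ) (p : Pt) : ℕ := {l | l ∈ C.L k ∧ p ∈ l}.ncard

/-- `δ k`, the minimum degree of a point of `P k`. -/
def minDeg (C : IterConfig) (k : ℕ) : ℕ := sInf {d | ∃ p ∈ C.P k, d = ptDeg C k p}


open Set AffineSubspace

lemma mem_lineThrough_left (p q : Pt) : p ∈ lineThrough p q :=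
  left_mem_affineSpan_pair ℝ p q

lemma mem_lineThrough_right (p q : Pt) : q ∈ lineThrough p q :=
  right_mem_affineSpan_pair ℝ p q

lemma direction_lineThrough {p q : Pt} :
    (lineThrough p q).direction = ℝ ∙ (p -ᵥ q) := by
  rw [lineThrough, direction_affineSpan, vectorSpan_pair]

lemma isLine_lineThrough {p q : Pt} (h : p ≠ q) : IsLine (lineThrough p q) := by
  rw [IsLine, direction_lineThrough]
  exact finrank_span_singleton (vsub_ne_zero.mpr h)

lemma line_eq_of_mem {l : Ln} (hl : IsLine l) {p q : Pt} (hp : p ∈ l) (hq : q ∈ l)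
    (hpq : p ≠ q) : l = lineThrough p q := by
  have h1 : lineThrough p q ≤ l := by
    rw [lineThrough, affineSpan_le]
    rintro x (rfl | rfl) <;> simpa
  have h2 : (lineThrough p q).direction = l.direction := by
    apply Submodule.eq_of_le_of_finrank_eq (AffineSubspace.direction_le h1)
    rw [(isLine_lineThrough hpq : _ = 1), hl]
  exact (ext_of_direction_eq h2 ⟨p, mem_lineThrough_left p q, hp⟩).symm

lemma inter_unique {l l' : Ln} (hl : IsLine l) (hne : l ≠ l') {x y : Pt}
    (hxl : x ∈ l) (hxl' : x ∈ l') (hyl : y ∈ l) (hyl' : y ∈ l') (hl' : IsLine l') : x = y := by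
  by_contra hxy
  exact hne ((line_eq_of_mem hl hxl hyl hxy).trans (line_eq_of_mem hl' hxl' hyl' hxy).symm)

lemma finrank_Pt : Module.finrank ℝ Pt = 2 := by
  simp [Module.finrank_prod]

lemma inter_exists {l l' : Ln} (hl : IsLine l) (hl' : IsLine l')
    (hd : l.direction ≠ l'.direction) {p q : Pt} (hp : p ∈ l) (hq : q ∈ l') :
    ∃ x, x ∈ l ∧ x ∈ l' := by
  have htop : l.direction ⊔ l'.direction = ⊤ := by
    apply Submodule.eq_top_of_finrank_eq
    rw [finrank_Pt]
    by_contra hne2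
    have hbl : Module.finrank ℝ l.direction = 1 := hl
    have hbl' : Module.finrank ℝ l'.direction = 1 := hl'
    have hle : Module.finrank ℝ ↥(l.direction ⊔ l'.direction) ≤ 2 := by
      rw [← finrank_Pt]; exact Submodule.finrank_le _
    have e1 : l.direction = l.direction ⊔ l'.direction :=
      Submodule.eq_of_le_of_finrank_le le_sup_left (by omega)
    have e2 : l'.direction = l.direction ⊔ l'.direction :=
      Submodule.eq_of_le_of_finrank_le le_sup_right (by omega)
    exact hd (e1.trans e2.symm)
  have hmem : (q -ᵥ p : Pt) ∈ l.direction ⊔ l'.direction := htop ▸ Submodule.mem_top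
  obtain ⟨v, hv, w, hw, hvw⟩ := Submodule.mem_sup.mp hmem
  refine ⟨v +ᵥ p, AffineSubspace.vadd_mem_of_mem_direction hv hp, ?_⟩
  have : v +ᵥ p = (-w) +ᵥ q := by
    have : v + w = q - p := hvw
    change v + p = -w + q
    linear_combination this
  rw [this]
  exact AffineSubspace.vadd_mem_of_mem_direction (Submodule.neg_mem _ hw) hq

lemma collinear_of_subset_line {l : Ln} (hl : IsLine l) {s : Set Pt}
    (hs : s ⊆ (l : Set Pt)) : Collinear ℝ s := by
  have h1 : affineSpan ℝ s ≤ l := affineSpan_le.mpr hs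
  have h2 : vectorSpan ℝ s ≤ l.direction := by
    rw [← direction_affineSpan]; exact AffineSubspace.direction_le h1
  have h3 : Module.rank ℝ l.direction ≤ 1 := by
    rw [Module.rank_eq_one_iff_finrank_eq_one.mpr hl]
  exact le_trans (Submodule.rank_mono h2) h3




-- counting helpers
lemma ncard_le_sum_cover {α β : Type*} (J : Finset β) (f : β → Set α) :
    ∀ T : Set α, T.Finite → (T ⊆ ⋃ i ∈ J, f i) → T.ncard ≤ ∑ i ∈ J, (T ∩ f i).ncard := by
  classical
  induction J using Finset.induction_on with
  | empty => intro T hT hcov; simp only [Finset.notMem_empty, iUnion_of_empty, iUnion_empty,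
      subset_empty_iff] at hcov; simp [hcov]
  | @insert a J ha ih =>
    intro T hT hcov
    rw [Finset.sum_insert ha]
    have h1 : (T ∩ f a).ncard + (T \ f a).ncard = T.ncard :=
      Set.ncard_inter_add_ncard_diff_eq_ncard T (f a) hT
    have h2 : (T \ f a) ⊆ ⋃ i ∈ J, f i := by
      intro x hx
      have := hcov hx.1
      simp only [Finset.mem_insert, iUnion_iUnion_eq_or_left, mem_union, mem_iUnion] at this ⊢
      rcases this with h | h
      · exact absurd h hx.2
      · exact h
    have h3 := ih (T \ f a) (hT.diff) h2
    have h4 : ∑ i ∈ J, ((T \ f a) ∩ f i).ncard ≤ ∑ i ∈ J, (T ∩ f i).ncard := by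
      apply Finset.sum_le_sum
      intro i _
      exact Set.ncard_le_ncard (inter_subset_inter_left _ diff_subset) (hT.inter_of_left _)
    omega

lemma cover_pigeonhole {α β : Type*} {I : Set β} (hI : I.Finite) (hne : I.Nonempty)
    (f : β → Set α) {T : Set α} (hT : T.Finite) (hcov : T ⊆ ⋃ i ∈ I, f i) :
    ∃ i ∈ I, T.ncard ≤ I.ncard * (T ∩ f i).ncard := by
  classical
  have hcov' : T ⊆ ⋃ i ∈ hI.toFinset, f i := by simpa using hcov
  have h1 := ncard_le_sum_cover hI.toFinset f T hT hcov'
  obtain ⟨i₀, hi₀, hmax⟩ := hI.toFinset.exists_max_image (fun i => (T ∩ f i).ncard)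
    (by simpa using hne)
  refine ⟨i₀, by simpa using hi₀, ?_⟩
  calc T.ncard ≤ ∑ i ∈ hI.toFinset, (T ∩ f i).ncard := h1
    _ ≤ hI.toFinset.card * (T ∩ f i₀).ncard := by
        rw [Finset.card_eq_sum_ones, Finset.sum_mul, one_mul]
        exact Finset.sum_le_sum hmax
    _ = I.ncard * (T ∩ f i₀).ncard := by rw [Set.ncard_eq_toFinset_card _ hI]

lemma sum_ncard_le_of_disjoint {α β : Type*} (J : Finset β) (f : β → Set α) :
    ∀ X : Set α, X.Finite → (∀ i ∈ J, f i ⊆ X) →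
    (∀ i ∈ J, ∀ j ∈ J, i ≠ j → Disjoint (f i) (f j)) →
    ∑ i ∈ J, (f i).ncard ≤ X.ncard := by
  classical
  induction J using Finset.induction_on with
  | empty => intro X _ _ _; simp
  | @insert a J ha ih =>
    intro X hX hsub hdisj
    rw [Finset.sum_insert ha]
    have h1 : ∀ i ∈ J, f i ⊆ X \ f a := by
      intro i hi
      have hd := hdisj a (Finset.mem_insert_self a J) i (Finset.mem_insert_of_mem hi)
        (by rintro rfl; exact ha hi)
      exact subset_diff.mpr ⟨hsub i (Finset.mem_insert_of_mem hi), hd.symm⟩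
    have h2 := ih (X \ f a) (hX.diff) h1 (fun i hi j hj hij =>
      hdisj i (Finset.mem_insert_of_mem hi) j (Finset.mem_insert_of_mem hj) hij)
    have h3 : (X ∩ f a).ncard + (X \ f a).ncard = X.ncard :=
      Set.ncard_inter_add_ncard_diff_eq_ncard X (f a) hX
    have h4 : X ∩ f a = f a := inter_eq_self_of_subset_right (hsub a (Finset.mem_insert_self a J))
    rw [h4] at h3
    omega

namespace IterConfig
variable (C : IterConfig)

lemma P_mono {k : ℕ} (hk : 1 ≤ k) : C.P k ⊆ C.P (k + 1) := by
  rw [C.P_succ k hk]; exact subset_union_left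

lemma L_mono {k : ℕ} (hk : 1 ≤ k) : C.L k ⊆ C.L (k + 1) := by
  rw [C.L_succ k hk]; exact subset_union_left

lemma P_mono' {j k : ℕ} (hj : 1 ≤ j) (hjk : j ≤ k) : C.P j ⊆ C.P k := by
  induction k with
  | zero => omega
  | succ n ih =>
    rcases Nat.lt_or_ge j (n+1) with h | h
    · exact (ih (by omega)).trans (C.P_mono (by omega))
    · have : j = n + 1 := by omega
      subst this; exact subset_rfl

lemma L_spec {k : ℕ} (hk : 1 ≤ k) :
    ∀ l ∈ C.L k, ∃ a ∈ C.P k, ∃ b ∈ C.P k, a ≠ b ∧ l = lineThrough a b := by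
  induction k with
  | zero => omega
  | succ n ih =>
    rcases Nat.lt_or_ge 1 (n+1) with h | h
    · have hn : 1 ≤ n := by omega
      intro l hl
      rw [C.L_succ n hn] at hl
      rcases hl with hl | ⟨a, ha, b, hb, hab, rfl⟩
      · obtain ⟨a, ha, b, hb, hab, rfl⟩ := ih hn l hl
        exact ⟨a, C.P_mono hn ha, b, C.P_mono hn hb, hab, rfl⟩
      · exact ⟨a, ha, b, hb, hab, rfl⟩
    · have : n + 1 = 1 := by omega
      rw [this, C.L1_def]
      rintro l ⟨a, ha, b, hb, hab, rfl⟩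
      exact ⟨a, ha, b, hb, hab, rfl⟩

lemma L_isLine {k : ℕ} (hk : 1 ≤ k) {l : Ln} (hl : l ∈ C.L k) : IsLine l := by
  obtain ⟨a, _, b, _, hab, rfl⟩ := C.L_spec hk l hl
  exact isLine_lineThrough hab

lemma joins_mem {k : ℕ} (hk : 2 ≤ k) {p q : Pt} (hp : p ∈ C.P k) (hq : q ∈ C.P k)
    (hpq : p ≠ q) : lineThrough p q ∈ C.L k := by
  obtain ⟨n, rfl⟩ : ∃ n, k = n + 1 := ⟨k - 1, by omega⟩
  rw [C.L_succ n (by omega)]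
  exact Or.inr ⟨p, hp, q, hq, hpq, rfl⟩

lemma cross_mem {k : ℕ} (hk : 1 ≤ k) {l l' : Ln} (hl : l ∈ C.L k) (hl' : l' ∈ C.L k)
    (hne : l ≠ l') {x : Pt} (hx : x ∈ l) (hx' : x ∈ l') : x ∈ C.P (k + 1) := by
  rw [C.P_succ k hk]
  exact Or.inr ⟨l, hl, l', hl', hne, hx, hx'⟩

lemma P1_finite : (C.P 1).Finite := by
  by_contra h
  have := Set.Infinite.ncard (h : (C.P 1).Infinite)
  rw [C.card_P1] at this
  omega

lemma PL_finite {k : ℕ} (hk : 1 ≤ k) : (C.P k).Finite ∧ (C.L k).Finite := by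
  induction k with
  | zero => omega
  | succ n ih =>
    rcases Nat.lt_or_ge 1 (n+1) with h | h
    · have hn : 1 ≤ n := by omega
      obtain ⟨hP, hL⟩ := ih hn
      have hPn : (C.P (n+1)).Finite := by
        rw [C.P_succ n hn]
        apply hP.union
        have hsub : {x | ∃ l ∈ C.L n, ∃ l' ∈ C.L n, l ≠ l' ∧ x ∈ l ∧ x ∈ l'} ⊆
            ⋃ l ∈ C.L n, ⋃ l' ∈ C.L n, {x | l ≠ l' ∧ x ∈ l ∧ x ∈ l'} := by
          rintro x ⟨l, hl, l', hl', hne, hx, hx'⟩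
          simp only [mem_iUnion]
          exact ⟨l, hl, l', hl', hne, hx, hx'⟩
        apply Set.Finite.subset _ hsub
        apply hL.biUnion; intro l hl
        apply hL.biUnion; intro l' hl'
        rcases eq_or_ne l l' with rfl | hne
        · simp
        · apply Set.Subsingleton.finite
          intro x hx y hy
          exact inter_unique (C.L_isLine hn hl) hne hx.2.1 hx.2.2 hy.2.1 hy.2.2
            (C.L_isLine hn hl')
      refine ⟨hPn, ?_⟩
      rw [C.L_succ n hn]
      apply hL.union
      have hsub : {l | ∃ p ∈ C.P (n+1), ∃ q ∈ C.P (n+1), p ≠ q ∧ l = lineThrough p q} ⊆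
          Set.image2 lineThrough (C.P (n+1)) (C.P (n+1)) := by
        rintro l ⟨p, hp, q, hq, hpq, rfl⟩
        exact ⟨p, hp, q, hq, rfl⟩
      exact Set.Finite.subset (hPn.image2 _ hPn) hsub
    · have h1 : n + 1 = 1 := by omega
      rw [h1]
      refine ⟨C.P1_finite, ?_⟩
      rw [C.L1_def]
      have hsub : {l | ∃ p ∈ C.P 1, ∃ q ∈ C.P 1, p ≠ q ∧ l = lineThrough p q} ⊆
          Set.image2 lineThrough (C.P 1) (C.P 1) := by
        rintro l ⟨p, hp, q, hq, hpq, rfl⟩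
        exact ⟨p, hp, q, hq, rfl⟩
      exact Set.Finite.subset ((C.P1_finite).image2 _ (C.P1_finite)) hsub

lemma P_finite {k : ℕ} (hk : 1 ≤ k) : (C.P k).Finite := (C.PL_finite hk).1
lemma L_finite {k : ℕ} (hk : 1 ≤ k) : (C.L k).Finite := (C.PL_finite hk).2

lemma four_le_nPts {k : ℕ} (hk : 1 ≤ k) : 4 ≤ nPts C k := by
  have h := Set.ncard_le_ncard (C.P_mono' (le_refl 1) hk) (C.P_finite hk)
  rw [C.card_P1] at h
  exact h
end IterConfig


lemma ncard_prod_eq {α β : Type*} {s : Set α} {t : Set β} (hs : s.Finite) (ht : t.Finite) :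
    (s ×ˢ t).ncard = s.ncard * t.ncard := by
  rw [Set.ncard_eq_toFinset_card _ (hs.prod ht), Set.ncard_eq_toFinset_card _ hs,
    Set.ncard_eq_toFinset_card _ ht, ← Finset.card_product, Set.Finite.toFinset_prod]

namespace IterConfig
variable (C : IterConfig)

lemma pencil_finite {k : ℕ} (hk : 1 ≤ k) (p : Pt) :
    {l | l ∈ C.L k ∧ p ∈ l}.Finite :=
  (C.L_finite hk).subset (fun l hl => hl.1)

lemma exists_three_P1 (p : Pt) :
    ∃ a b c, a ∈ C.P 1 ∧ b ∈ C.P 1 ∧ c ∈ C.P 1 ∧ a ≠ b ∧ a ≠ c ∧ b ≠ c ∧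
      a ≠ p ∧ b ≠ p ∧ c ≠ p := by
  have hfin : (C.P 1 \ {p}).Finite := C.P1_finite.diff
  have hcard : 2 < (C.P 1 \ {p}).ncard := by
    have hsub : C.P 1 ⊆ (C.P 1 \ {p}) ∪ {p} := by
      intro x hx
      by_cases hxp : x = p
      · exact Or.inr (by simp [hxp])
      · exact Or.inl ⟨hx, by simp [hxp]⟩
    have h1 := (Set.ncard_le_ncard hsub (hfin.union (Set.finite_singleton p))).trans
      (Set.ncard_union_le _ _)
    rw [C.card_P1] at h1
    simp only [Set.ncard_singleton] at h1
    omega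
  obtain ⟨a, b, c, ha, hb, hc, hab, hac, hbc⟩ := (Set.two_lt_ncard_iff hfin).mp hcard
  exact ⟨a, b, c, ha.1, hb.1, hc.1, hab, hac, hbc,
    by simpa using ha.2, by simpa using hb.2, by simpa using hc.2⟩

lemma line_mem_of_join {k : ℕ} (hk : 1 ≤ k) {p q : Pt} (hp : p ∈ C.P k) (hq1 : q ∈ C.P 1)
    (hpq : p ≠ q) : lineThrough p q ∈ C.L k := by
  rcases Nat.lt_or_ge k 2 with h | h
  · have : k = 1 := by omega
    subst this
    rw [C.L1_def]
    exact ⟨p, hp, q, hq1, hpq, rfl⟩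
  · exact C.joins_mem h hp (C.P_mono' (le_refl 1) hk hq1) hpq

lemma two_le_ptDeg {k : ℕ} (hk : 1 ≤ k) {p : Pt} (hp : p ∈ C.P k) :
    2 ≤ ptDeg C k p := by
  obtain ⟨a, b, c, ha, hb, hc, hab, hac, hbc, hap, hbp, hcp⟩ := C.exists_three_P1 p
  have hmema : lineThrough p a ∈ C.L k := C.line_mem_of_join hk hp ha (Ne.symm hap)
  have hmemb : lineThrough p b ∈ C.L k := C.line_mem_of_join hk hp hb (Ne.symm hbp)
  have hmemc : lineThrough p c ∈ C.L k := C.line_mem_of_join hk hp hc (Ne.symm hcp)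
  have hne : lineThrough p a ≠ lineThrough p b ∨ lineThrough p a ≠ lineThrough p c := by
    by_contra h
    push_neg at h
    obtain ⟨h1, h2⟩ := h
    apply C.genPos a ha b hb c hc hab hac hbc
    apply collinear_of_subset_line (isLine_lineThrough (Ne.symm hap))
    intro x hx
    rcases hx with rfl | rfl | rfl
    · exact mem_lineThrough_right p _
    · rw [h1]; exact mem_lineThrough_right p _
    · rw [h2]; exact mem_lineThrough_right p _
  have hfin := C.pencil_finite hk p
  rw [ptDeg]
  rw [show (2 : ℕ) = 1 + 1 by rfl, Nat.add_one_le_iff]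
  apply (Set.one_lt_ncard hfin).mpr
  rcases hne with h | h
  · exact ⟨lineThrough p a, ⟨hmema, mem_lineThrough_left p a⟩,
      lineThrough p b, ⟨hmemb, mem_lineThrough_left p b⟩, h⟩
  · exact ⟨lineThrough p a, ⟨hmema, mem_lineThrough_left p a⟩,
      lineThrough p c, ⟨hmemc, mem_lineThrough_left p c⟩, h⟩

lemma minDeg_spec {k : ℕ} (hk : 1 ≤ k) :
    ∃ p ∈ C.P k, minDeg C k = ptDeg C k p := by
  have hne : {d | ∃ p ∈ C.P k, d = ptDeg C k p}.Nonempty := by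
    have : (C.P k).Nonempty := by
      rcases Set.eq_empty_or_nonempty (C.P k) with h | h
      · exfalso; have := C.four_le_nPts hk; rw [nPts, h] at this; simp at this
      · exact h
    obtain ⟨p, hp⟩ := this
    exact ⟨ptDeg C k p, p, hp, rfl⟩
  obtain ⟨p, hp, hd⟩ := Nat.sInf_mem hne
  exact ⟨p, hp, hd⟩

lemma minDeg_le {k : ℕ} {p : Pt} (hp : p ∈ C.P k) : minDeg C k ≤ ptDeg C k p :=
  Nat.sInf_le ⟨p, hp, rfl⟩

lemma two_le_minDeg {k : ℕ} (hk : 1 ≤ k) : 2 ≤ minDeg C k := by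
  obtain ⟨p, hp, hd⟩ := C.minDeg_spec hk
  rw [hd]
  exact C.two_le_ptDeg hk hp

lemma nLns_le_sq {k : ℕ} (hk : 1 ≤ k) : nLns C k ≤ nPts C k * nPts C k := by
  have hP := C.P_finite hk
  have hsub : C.L k ⊆ (fun ab : Pt × Pt => lineThrough ab.1 ab.2) '' (C.P k ×ˢ C.P k) := by
    intro l hl
    obtain ⟨a, ha, b, hb, hab, rfl⟩ := C.L_spec hk l hl
    exact ⟨(a, b), ⟨ha, hb⟩, rfl⟩
  calc nLns C k ≤ ((fun ab : Pt × Pt => lineThrough ab.1 ab.2) '' (C.P k ×ˢ C.P k)).ncard :=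
        Set.ncard_le_ncard hsub ((hP.prod hP).image _)
    _ ≤ (C.P k ×ˢ C.P k).ncard := Set.ncard_image_le (hP.prod hP)
    _ = nPts C k * nPts C k := ncard_prod_eq hP hP

end IterConfig

noncomputable def interPt (l l' : Ln) : Pt := Classical.epsilon fun x => x ∈ l ∧ x ∈ l'

lemma interPt_spec {l l' : Ln} (h : ∃ x, x ∈ l ∧ x ∈ l') :
    interPt l l' ∈ l ∧ interPt l l' ∈ l' := Classical.epsilon_spec h

lemma eq_interPt {l l' : Ln} (hl : IsLine l) (hl' : IsLine l') (hne : l ≠ l') {x : Pt}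
    (hx : x ∈ l) (hx' : x ∈ l') : x = interPt l l' := by
  have hspec := interPt_spec ⟨x, hx, hx'⟩
  exact inter_unique hl hne hx hx' hspec.1 hspec.2 hl'

namespace IterConfig
variable (C : IterConfig)

lemma nPts_succ_le {k : ℕ} (hk : 1 ≤ k) :
    nPts C (k + 1) ≤ nPts C k + nLns C k * nLns C k := by
  have hL := C.L_finite hk
  have hP := C.P_finite hk
  rw [nPts, C.P_succ k hk]
  refine le_trans (Set.ncard_union_le _ _) ?_
  gcongr
  · exact le_refl _
  have hsub : {x | ∃ l ∈ C.L k, ∃ l' ∈ C.L k, l ≠ l' ∧ x ∈ l ∧ x ∈ l'} ⊆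
      (fun p : Ln × Ln => interPt p.1 p.2) '' (C.L k ×ˢ C.L k) := by
    rintro x ⟨l, hl, l', hl', hne, hx, hx'⟩
    exact ⟨(l, l'), ⟨hl, hl'⟩,
      (eq_interPt (C.L_isLine hk hl) (C.L_isLine hk hl') hne hx hx').symm⟩
  calc _ ≤ ((fun p : Ln × Ln => interPt p.1 p.2) '' (C.L k ×ˢ C.L k)).ncard :=
        Set.ncard_le_ncard hsub ((hL.prod hL).image _)
    _ ≤ (C.L k ×ˢ C.L k).ncard := Set.ncard_image_le (hL.prod hL)
    _ = nLns C k * nLns C k := ncard_prod_eq hL hL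

end IterConfig

namespace IterConfig
variable (C : IterConfig)

lemma main_bound {k : ℕ} (hk : 2 ≤ k) {p : Pt} (hp : p ∈ C.P (k + 1)) :
    nPts C k ≤ (ptDeg C (k + 1) p + 1) ^ 2 := by
  classical
  have hk1 : 1 ≤ k := by omega
  have hk1' : 1 ≤ k + 1 := by omega
  have hk2' : 2 ≤ k + 1 := by omega
  set D := ptDeg C (k + 1) p with hDdef
  have hD2 : 2 ≤ D := C.two_le_ptDeg hk1' hp
  set Lp := {l | l ∈ C.L (k + 1) ∧ p ∈ l} with hLpdef
  have hLp_fin : Lp.Finite := C.pencil_finite hk1' p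
  have hLp_card : Lp.ncard = D := rfl
  have hLp_ne : Lp.Nonempty := by
    rw [← Set.ncard_pos hLp_fin, hLp_card]; omega
  have hPfin := C.P_finite hk1
  have hP1fin := C.P1_finite
  -- Step 1 : covering P k by the lines through p
  set T := C.P k \ {p} with hTdef
  have hTfin : T.Finite := hPfin.diff
  have hT_lb : nPts C k ≤ T.ncard + 1 := by
    have hsub : C.P k ⊆ T ∪ {p} := by
      intro x hx
      by_cases hxp : x = p
      · exact Or.inr (by simp [hxp])
      · exact Or.inl ⟨hx, by simp [hxp]⟩
    have := (Set.ncard_le_ncard hsub (hTfin.union (Set.finite_singleton p))).trans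
      (Set.ncard_union_le _ _)
    simpa [nPts] using this
  have hTne : T.Nonempty := by
    rw [← Set.ncard_pos hTfin]
    have := C.four_le_nPts hk1
    omega
  have hTcov : T ⊆ ⋃ l ∈ Lp, (l : Set Pt) := by
    intro x hx
    have hxP : x ∈ C.P (k + 1) := C.P_mono hk1 hx.1
    have hxp : p ≠ x := by
      intro hh
      exact hx.2 (by rw [Set.mem_singleton_iff]; exact hh.symm)
    have hm : lineThrough p x ∈ C.L (k + 1) := C.joins_mem hk2' hp hxP hxp
    refine Set.mem_biUnion (show lineThrough p x ∈ Lp from ⟨hm, mem_lineThrough_left p x⟩) ?_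
    exact mem_lineThrough_right p x
  obtain ⟨l₀, hl₀Lp, hT_le⟩ := cover_pigeonhole hLp_fin hLp_ne (fun l : Ln => (l : Set Pt))
    hTfin hTcov
  rw [hLp_card] at hT_le
  set S := T ∩ (l₀ : Set Pt) with hSdef
  set h := S.ncard with hhdef
  have hSfin : S.Finite := hTfin.inter_of_left _
  have hl₀L : l₀ ∈ C.L (k + 1) := hl₀Lp.1
  have hl₀line : IsLine l₀ := C.L_isLine hk1' hl₀L
  have hnk : nPts C k ≤ D * h + 1 := by omega
  -- base points q q' off l₀
  have hP1l₀ : (C.P 1 ∩ (l₀ : Set Pt)).ncard ≤ 2 := by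
    by_contra hcon
    push_neg at hcon
    obtain ⟨a, b, c, ha, hb, hc, hab, hac, hbc⟩ :=
      (Set.two_lt_ncard_iff (hP1fin.inter_of_left _)).mp hcon
    apply C.genPos a ha.1 b hb.1 c hc.1 hab hac hbc
    apply collinear_of_subset_line hl₀line
    intro x hx
    rcases hx with rfl | rfl | rfl
    · exact ha.2
    · exact hb.2
    · exact hc.2
  obtain ⟨q, q', hqW, hq'W, hqq'⟩ : ∃ q q', q ∈ C.P 1 \ (l₀ : Set Pt) ∧
      q' ∈ C.P 1 \ (l₀ : Set Pt) ∧ q ≠ q' := by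
    have hWfin : (C.P 1 \ (l₀ : Set Pt)).Finite := hP1fin.diff
    have hW_lb : 1 < (C.P 1 \ (l₀ : Set Pt)).ncard := by
      have hsub : C.P 1 ⊆ (C.P 1 ∩ (l₀ : Set Pt)) ∪ (C.P 1 \ (l₀ : Set Pt)) := by
        intro x hx
        by_cases hxl : x ∈ (l₀ : Set Pt)
        · exact Or.inl ⟨hx, hxl⟩
        · exact Or.inr ⟨hx, hxl⟩
      have := (Set.ncard_le_ncard hsub ((hP1fin.inter_of_left _).union hWfin)).trans
        (Set.ncard_union_le _ _)
      rw [C.card_P1] at this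
      omega
    obtain ⟨q, hq, q', hq', hne⟩ := (Set.one_lt_ncard hWfin).mp hW_lb
    exact ⟨q, q', hq, hq', hne⟩
  have hq1 : q ∈ C.P 1 := hqW.1
  have hq'1 : q' ∈ C.P 1 := hq'W.1
  have hql₀ : q ∉ (l₀ : Set Pt) := hqW.2
  have hq'l₀ : q' ∉ (l₀ : Set Pt) := hq'W.2
  have hqPk : q ∈ C.P k := C.P_mono' le_rfl hk1 hq1
  have hq'Pk : q' ∈ C.P k := C.P_mono' le_rfl hk1 hq'1
  -- pencils
  have hSl₀ : ∀ z ∈ S, z ∈ (l₀ : Set Pt) := fun z hz => hz.2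
  have hSPk : ∀ z ∈ S, z ∈ C.P k := fun z hz => hz.1.1
  have hqz : ∀ z ∈ S, q ≠ z := fun z hz hq => hql₀ (hq ▸ hz.2)
  have hq'z : ∀ z ∈ S, q' ≠ z := fun z hz hq => hq'l₀ (hq ▸ hz.2)
  set A := (fun z => lineThrough q z) '' S with hAdef
  set B := (fun z => lineThrough q' z) '' S with hBdef
  have hAfin : A.Finite := hSfin.image _
  have hBfin : B.Finite := hSfin.image _
  have hAinj : Set.InjOn (fun z => lineThrough q z) S := by
    intro z hz z' hz' heq
    replace heq : lineThrough q z = lineThrough q z' := heq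
    by_contra hne
    have hz'mem : z' ∈ lineThrough q z := by
      rw [heq]; exact mem_lineThrough_right q z'
    have h1 : lineThrough q z = lineThrough z z' :=
      line_eq_of_mem (isLine_lineThrough (hqz z hz)) (mem_lineThrough_right q z) hz'mem hne
    have h2 : l₀ = lineThrough z z' :=
      line_eq_of_mem hl₀line (hSl₀ z hz) (hSl₀ z' hz') hne
    apply hql₀
    rw [h2, ← h1]
    exact mem_lineThrough_left q z
  have hBinj : Set.InjOn (fun z => lineThrough q' z) S := by
    intro z hz z' hz' heq
    replace heq : lineThrough q' z = lineThrough q' z' := heq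
    by_contra hne
    have hz'mem : z' ∈ lineThrough q' z := by
      rw [heq]; exact mem_lineThrough_right q' z'
    have h1 : lineThrough q' z = lineThrough z z' :=
      line_eq_of_mem (isLine_lineThrough (hq'z z hz)) (mem_lineThrough_right q' z) hz'mem hne
    have h2 : l₀ = lineThrough z z' :=
      line_eq_of_mem hl₀line (hSl₀ z hz) (hSl₀ z' hz') hne
    apply hq'l₀
    rw [h2, ← h1]
    exact mem_lineThrough_left q' z
  have hAcard : A.ncard = h := Set.ncard_image_of_injOn hAinj
  have hBcard : B.ncard = h := Set.ncard_image_of_injOn hBinj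
  have hA_L : A ⊆ C.L k := by
    rintro l ⟨z, hz, rfl⟩
    exact C.joins_mem hk hqPk (hSPk z hz) (hqz z hz)
  have hB_L : B ⊆ C.L k := by
    rintro l ⟨z, hz, rfl⟩
    exact C.joins_mem hk hq'Pk (hSPk z hz) (hq'z z hz)
  have hqA : ∀ l ∈ A, q ∈ l := by rintro l ⟨z, hz, rfl⟩; exact mem_lineThrough_left q z
  have hq'B : ∀ l ∈ B, q' ∈ l := by rintro l ⟨z, hz, rfl⟩; exact mem_lineThrough_left q' z
  set e := lineThrough q q' with hedef
  set A' := A \ {e} with hA'def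
  set B' := B \ {e} with hB'def
  have hA'fin : A'.Finite := hAfin.diff
  have hB'fin : B'.Finite := hBfin.diff
  have hA'card_ub : A'.ncard ≤ h := le_trans (Set.ncard_le_ncard diff_subset hAfin) hAcard.le
  have hB'card_ub : B'.ncard ≤ h := le_trans (Set.ncard_le_ncard diff_subset hBfin) hBcard.le
  have hA'card_lb : h - 1 ≤ A'.ncard := by
    have hsub : A ⊆ A' ∪ {e} := by
      intro l hl
      by_cases hle : l = e
      · exact Or.inr (by simp [hle])
      · exact Or.inl ⟨hl, by simp [hle]⟩
    have := (Set.ncard_le_ncard hsub (hA'fin.union (Set.finite_singleton e))).trans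
      (Set.ncard_union_le _ _)
    rw [hAcard] at this
    simp only [Set.ncard_singleton] at this
    omega
  have hB'card_lb : h - 1 ≤ B'.ncard := by
    have hsub : B ⊆ B' ∪ {e} := by
      intro l hl
      by_cases hle : l = e
      · exact Or.inr (by simp [hle])
      · exact Or.inl ⟨hl, by simp [hle]⟩
    have := (Set.ncard_le_ncard hsub (hB'fin.union (Set.finite_singleton e))).trans
      (Set.ncard_union_le _ _)
    rw [hBcard] at this
    simp only [Set.ncard_singleton] at this
    omega
  -- lines in A' and B' are distinct and meet
  have hABne : ∀ l ∈ A', ∀ l' ∈ B', l ≠ l' := by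
    rintro l hl l' hl' rfl
    have h1 : q ∈ l := hqA l hl.1
    have h2 : q' ∈ l := hq'B l hl'.1
    have : l = e := line_eq_of_mem (C.L_isLine hk1 (hA_L hl.1)) h1 h2 hqq'
    exact hl.2 (by simp [this])
  have hA'B'_disj : ∀ l ∈ A', l ∉ B' := fun l hl hl' => hABne l hl l hl' rfl
  set X := {x : Pt | ∃ l ∈ A', ∃ l' ∈ B', x ∈ l ∧ x ∈ l'} with hXdef
  have hX_sub : X ⊆ C.P (k + 1) := by
    rintro x ⟨l, hl, l', hl', hx, hx'⟩
    exact C.cross_mem hk1 (hA_L hl.1) (hB_L hl'.1) (hABne l hl l' hl') hx hx'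
  have hXfin : X.Finite := (C.P_finite hk1').subset hX_sub
  have hqX : q ∉ X := by
    rintro ⟨l, hl, l', hl', hx, hx'⟩
    have h2 : q' ∈ l' := hq'B l' hl'.1
    have : l' = e := line_eq_of_mem (C.L_isLine hk1 (hB_L hl'.1)) hx' h2 hqq'
    exact hl'.2 (by simp [this])
  have hq'X : q' ∉ X := by
    rintro ⟨l, hl, l', hl', hx, hx'⟩
    have h1 : q ∈ l := hqA l hl.1
    have : l = e := line_eq_of_mem (C.L_isLine hk1 (hA_L hl.1)) h1 hx hqq'
    exact hl.2 (by simp [this])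
  -- lower bound on |X|
  have hXlower : (h - 1) * (h - 1) ≤ X.ncard := by
    have hJsub : ∀ l ∈ hA'fin.toFinset, X ∩ (l : Set Pt) ⊆ X := fun l _ => inter_subset_left
    have hJdisj : ∀ l ∈ hA'fin.toFinset, ∀ l' ∈ hA'fin.toFinset, l ≠ l' →
        Disjoint (X ∩ (l : Set Pt)) (X ∩ (l' : Set Pt)) := by
      intro l hl l' hl' hne
      rw [Set.disjoint_left]
      rintro x ⟨hxX, hxl⟩ ⟨_, hxl'⟩
      have hlA' : l ∈ A' := by simpa using hl
      have hl'A' : l' ∈ A' := by simpa using hl'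
      have hxq : x ≠ q := fun hh => hqX (hh ▸ hxX)
      have e1 : l = lineThrough q x :=
        line_eq_of_mem (C.L_isLine hk1 (hA_L hlA'.1)) (hqA l hlA'.1) hxl (Ne.symm hxq)
      have e2 : l' = lineThrough q x :=
        line_eq_of_mem (C.L_isLine hk1 (hA_L hl'A'.1)) (hqA l' hl'A'.1) hxl' (Ne.symm hxq)
      exact hne (e1.trans e2.symm)
    have hperline : ∀ l ∈ hA'fin.toFinset, (h - 1) ≤ (X ∩ (l : Set Pt)).ncard := by
      intro l hl
      have hlA' : l ∈ A' := by simpa using hl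
      have hmap : ∀ l' ∈ B', interPt l l' ∈ X ∩ (l : Set Pt) := by
        intro l' hl'
        have hdir : l.direction ≠ l'.direction :=
          C.noParallel k hk1 l (hA_L hlA'.1) l' (hB_L hl'.1) (hABne l hlA' l' hl')
        obtain ⟨x, hx, hx'⟩ := inter_exists (C.L_isLine hk1 (hA_L hlA'.1))
          (C.L_isLine hk1 (hB_L hl'.1)) hdir (hqA l hlA'.1) (hq'B l' hl'.1)
        have hspec := interPt_spec ⟨x, hx, hx'⟩
        exact ⟨⟨l, hlA', l', hl', hspec.1, hspec.2⟩, hspec.1⟩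
      have hinj : Set.InjOn (fun l' => interPt l l') B' := by
        intro l₁ hl₁ l₂ hl₂ heq
        replace heq : interPt l l₁ = interPt l l₂ := heq
        by_contra hne
        set x := interPt l l₁ with hxdef
        have hx₁ := hmap l₁ hl₁
        have hx₂ := hmap l₂ hl₂
        have hxX : x ∈ X := hx₁.1
        have hxq' : x ≠ q' := fun hh => hq'X (hh ▸ hxX)
        have hex₁ : ∃ y, y ∈ l ∧ y ∈ l₁ := by
          have hdir : l.direction ≠ l₁.direction :=
            C.noParallel k hk1 l (hA_L hlA'.1) l₁ (hB_L hl₁.1) (hABne l hlA' l₁ hl₁)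
          exact inter_exists (C.L_isLine hk1 (hA_L hlA'.1))
            (C.L_isLine hk1 (hB_L hl₁.1)) hdir (hqA l hlA'.1) (hq'B l₁ hl₁.1)
        have hex₂ : ∃ y, y ∈ l ∧ y ∈ l₂ := by
          have hdir : l.direction ≠ l₂.direction :=
            C.noParallel k hk1 l (hA_L hlA'.1) l₂ (hB_L hl₂.1) (hABne l hlA' l₂ hl₂)
          exact inter_exists (C.L_isLine hk1 (hA_L hlA'.1))
            (C.L_isLine hk1 (hB_L hl₂.1)) hdir (hqA l hlA'.1) (hq'B l₂ hl₂.1)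
        have hxl₁ : x ∈ l₁ := (interPt_spec hex₁).2
        have hxl₂ : x ∈ l₂ := by
          rw [heq]
          exact (interPt_spec hex₂).2
        have e1 : l₁ = lineThrough q' x :=
          line_eq_of_mem (C.L_isLine hk1 (hB_L hl₁.1)) (hq'B l₁ hl₁.1) hxl₁ (Ne.symm hxq')
        have e2 : l₂ = lineThrough q' x :=
          line_eq_of_mem (C.L_isLine hk1 (hB_L hl₂.1)) (hq'B l₂ hl₂.1) hxl₂ (Ne.symm hxq')
        exact hne (e1.trans e2.symm)
      have := Set.ncard_le_ncard_of_injOn (fun l' => interPt l l') hmap hinj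
        (hXfin.inter_of_left _)
      omega
    have hsum1 : hA'fin.toFinset.card • (h - 1) ≤
        ∑ l ∈ hA'fin.toFinset, (X ∩ (l : Set Pt)).ncard :=
      Finset.card_nsmul_le_sum _ _ _ hperline
    have hsum2 : ∑ l ∈ hA'fin.toFinset, (X ∩ (l : Set Pt)).ncard ≤ X.ncard :=
      sum_ncard_le_of_disjoint hA'fin.toFinset
        (fun l : Ln => X ∩ (l : Set Pt)) X hXfin hJsub hJdisj
    have hca : hA'fin.toFinset.card = A'.ncard := (Set.ncard_eq_toFinset_card _ hA'fin).symm
    have hs : (h - 1) * (h - 1) ≤ A'.ncard * (h - 1) := by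
      apply Nat.mul_le_mul_right
      exact hA'card_lb
    rw [smul_eq_mul, hca] at hsum1
    omega
  -- upper bound : every line contains at most h points of X
  have hlineX : ∀ lam : Ln, IsLine lam → (X ∩ (lam : Set Pt)).ncard ≤ h := by
    intro lam hlam
    by_cases hmem : lam ∈ A'
    · -- map to B'
      have hmap : ∀ x ∈ X ∩ (lam : Set Pt),
          Classical.epsilon (fun l => l ∈ B' ∧ x ∈ l) ∈ B' := by
        rintro x ⟨⟨l, hl, l', hl', hx, hx'⟩, _⟩
        exact (Classical.epsilon_spec (⟨l', hl', hx'⟩ : ∃ m, m ∈ B' ∧ x ∈ m)).1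
      have hinj : Set.InjOn (fun x => Classical.epsilon (fun l => l ∈ B' ∧ x ∈ l))
          (X ∩ (lam : Set Pt)) := by
        rintro x ⟨hxX, hxlam⟩ y ⟨hyX, hylam⟩ heq
        replace heq : Classical.epsilon (fun l => l ∈ B' ∧ x ∈ l) =
          Classical.epsilon (fun l => l ∈ B' ∧ y ∈ l) := heq
        obtain ⟨lx, hlx, lx', hlx', hxl, hxl'⟩ := hxX
        obtain ⟨ly, hly, ly', hly', hyl, hyl'⟩ := hyX
        have hx_spec := Classical.epsilon_spec (⟨lx', hlx', hxl'⟩ : ∃ m, m ∈ B' ∧ x ∈ m)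
        have hy_spec := Classical.epsilon_spec (⟨ly', hly', hyl'⟩ : ∃ m, m ∈ B' ∧ y ∈ m)
        rw [heq] at hx_spec
        set m := Classical.epsilon (fun l => l ∈ B' ∧ y ∈ l) with hmdef
        have hmB' : m ∈ B' := hy_spec.1
        have hmlam : m ≠ lam := fun hh => hA'B'_disj lam hmem (hh ▸ hmB')
        exact inter_unique (C.L_isLine hk1 (hB_L hmB'.1)) hmlam hx_spec.2
          hxlam hy_spec.2 hylam hlam
      have := Set.ncard_le_ncard_of_injOn _ hmap hinj hB'fin
      omega
    · -- map to A'
      have hmap : ∀ x ∈ X ∩ (lam : Set Pt),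
          Classical.epsilon (fun l => l ∈ A' ∧ x ∈ l) ∈ A' := by
        rintro x ⟨⟨l, hl, l', hl', hx, hx'⟩, _⟩
        exact (Classical.epsilon_spec (⟨l, hl, hx⟩ : ∃ m, m ∈ A' ∧ x ∈ m)).1
      have hinj : Set.InjOn (fun x => Classical.epsilon (fun l => l ∈ A' ∧ x ∈ l))
          (X ∩ (lam : Set Pt)) := by
        rintro x ⟨hxX, hxlam⟩ y ⟨hyX, hylam⟩ heq
        replace heq : Classical.epsilon (fun l => l ∈ A' ∧ x ∈ l) =
          Classical.epsilon (fun l => l ∈ A' ∧ y ∈ l) := heq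
        obtain ⟨lx, hlx, lx', hlx', hxl, hxl'⟩ := hxX
        obtain ⟨ly, hly, ly', hly', hyl, hyl'⟩ := hyX
        have hx_spec := Classical.epsilon_spec (⟨lx, hlx, hxl⟩ : ∃ m, m ∈ A' ∧ x ∈ m)
        have hy_spec := Classical.epsilon_spec (⟨ly, hly, hyl⟩ : ∃ m, m ∈ A' ∧ y ∈ m)
        rw [heq] at hx_spec
        set m := Classical.epsilon (fun l => l ∈ A' ∧ y ∈ l) with hmdef
        have hmA' : m ∈ A' := hy_spec.1
        have hmlam : m ≠ lam := fun hh => hmem (hh ▸ hmA')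
        exact inter_unique (C.L_isLine hk1 (hA_L hmA'.1)) hmlam hx_spec.2
          hxlam hy_spec.2 hylam hlam
      have := Set.ncard_le_ncard_of_injOn _ hmap hinj hA'fin
      omega
  -- second covering : X ∖ {p} covered by lines through p
  have hquad : (h - 1) * (h - 1) ≤ D * h + 1 := by
    set T' := X \ {p} with hT'def
    have hT'fin : T'.Finite := hXfin.diff
    have hX_ub : X.ncard ≤ T'.ncard + 1 := by
      have hsub : X ⊆ T' ∪ {p} := by
        intro x hx
        by_cases hxp : x = p
        · exact Or.inr (by simp [hxp])
        · exact Or.inl ⟨hx, by simp [hxp]⟩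
      have := (Set.ncard_le_ncard hsub (hT'fin.union (Set.finite_singleton p))).trans
        (Set.ncard_union_le _ _)
      simpa using this
    rcases Set.eq_empty_or_nonempty T' with hT'e | hT'ne
    · have : X.ncard ≤ 1 := by rw [hT'e] at hX_ub; simpa using hX_ub
      omega
    · have hT'cov : T' ⊆ ⋃ l ∈ Lp, (l : Set Pt) := by
        rintro x ⟨hxX, hxp⟩
        have hxP : x ∈ C.P (k + 1) := hX_sub hxX
        have hpx : p ≠ x := by
          intro hh
          exact hxp (by rw [Set.mem_singleton_iff]; exact hh.symm)
        have hm : lineThrough p x ∈ C.L (k + 1) := C.joins_mem hk2' hp hxP hpx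
        refine Set.mem_biUnion (show lineThrough p x ∈ Lp from
          ⟨hm, mem_lineThrough_left p x⟩) ?_
        exact mem_lineThrough_right p x
      obtain ⟨lam₀, hlam₀, hT'le⟩ := cover_pigeonhole hLp_fin hLp_ne
        (fun l : Ln => (l : Set Pt)) hT'fin hT'cov
      rw [hLp_card] at hT'le
      have h1 : (T' ∩ (lam₀ : Set Pt)).ncard ≤ (X ∩ (lam₀ : Set Pt)).ncard :=
        Set.ncard_le_ncard (inter_subset_inter_left _ diff_subset) (hXfin.inter_of_left _)
      have h2 := hlineX lam₀ (C.L_isLine hk1' hlam₀.1)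
      calc (h - 1) * (h - 1) ≤ X.ncard := hXlower
        _ ≤ T'.ncard + 1 := hX_ub
        _ ≤ D * (T' ∩ (lam₀ : Set Pt)).ncard + 1 := by omega
        _ ≤ D * h + 1 := by
            have h3 : (T' ∩ (lam₀ : Set Pt)).ncard ≤ h := le_trans h1 h2
            have h4 := Nat.mul_le_mul_left D h3
            omega
  -- arithmetic conclusion
  have hh1 : 1 ≤ h := by
    by_contra hcon
    have : h = 0 := by omega
    rw [this] at hnk
    have := C.four_le_nPts hk1
    omega
  have hhD : h ≤ D + 2 := by
    by_contra hcon
    push_neg at hcon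
    obtain ⟨a, ha⟩ : ∃ a, h = a + 1 := ⟨h - 1, by omega⟩
    rw [ha] at hquad hcon
    simp only [Nat.add_sub_cancel] at hquad
    have h3 : D + 2 ≤ a := by omega
    nlinarith
  calc nPts C k ≤ D * h + 1 := hnk
    _ ≤ D * (D + 2) + 1 := by
        have := Nat.mul_le_mul_left D hhD
        omega
    _ = (D + 1) ^ 2 := by ring

end IterConfig

namespace IterConfig
variable (C : IterConfig)

lemma key_bound {k : ℕ} (hk : 1 ≤ k) : nPts C k ≤ 2 * (minDeg C k + 1) ^ 8 := by
  have hd2 : 2 ≤ minDeg C k := C.two_le_minDeg hk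
  rcases Nat.lt_or_ge k 3 with hk3 | hk3
  · -- k = 1 or k = 2 : small cases
    have hbound : nPts C k ≤ 260 := by
      interval_cases k
      · have h1 : nPts C 1 = 4 := C.card_P1
        omega
      · have h1 : nPts C 1 = 4 := C.card_P1
        have h2 := C.nPts_succ_le (le_refl 1)
        have h3 := C.nLns_le_sq (le_refl 1)
        rw [h1] at h2 h3
        nlinarith
    have : 2 * 3 ^ 8 ≤ 2 * (minDeg C k + 1) ^ 8 := by
      have : (3 : ℕ) ^ 8 ≤ (minDeg C k + 1) ^ 8 := Nat.pow_le_pow_left (by omega) 8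
      omega
    have h38 : (3 : ℕ) ^ 8 = 6561 := by norm_num
    omega
  · -- k ≥ 3
    obtain ⟨j, rfl⟩ : ∃ j, k = j + 1 := ⟨k - 1, by omega⟩
    have hj2 : 2 ≤ j := by omega
    have hj1 : 1 ≤ j := by omega
    obtain ⟨p₀, hp₀, hmin⟩ := C.minDeg_spec (show 1 ≤ j + 1 by omega)
    have hmain := C.main_bound hj2 hp₀
    rw [← hmin] at hmain
    set d := minDeg C (j + 1) with hddef
    set n := nPts C j with hndef
    have hgrow := C.nPts_succ_le hj1
    have hml := C.nLns_le_sq hj1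
    have hn1 : 1 ≤ n := le_trans (by norm_num) (C.four_le_nPts hj1)
    have h1 : nPts C (j + 1) ≤ n + n ^ 4 := by
      have : nLns C j * nLns C j ≤ (n * n) * (n * n) := Nat.mul_le_mul hml hml
      have h4 : (n * n) * (n * n) = n ^ 4 := by ring
      omega
    have h2 : n + n ^ 4 ≤ 2 * n ^ 4 := by
      have := Nat.le_self_pow (show 4 ≠ 0 by norm_num) n
      omega
    have h3 : n ^ 4 ≤ ((d + 1) ^ 2) ^ 4 := Nat.pow_le_pow_left hmain 4
    have h4 : ((d + 1) ^ 2) ^ 4 = (d + 1) ^ 8 := by ring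
    omega

end IterConfig

/-- For every `0 ≤ ε < 1/10` there is a constant `c > 0` with `δ k ≥ c * (n k)^ε`. -/
theorem stmt_12 (C : IterConfig) (ε : ℝ) (hε0 : 0 ≤ ε) (hε1 : ε < 1 / 10) :
    ∃ c : ℝ, 0 < c ∧ ∀ k, 1 ≤ k →
      c * (nPts C k : ℝ) ^ ε ≤ (minDeg C k : ℝ) := by
  refine ⟨1 / 2, by norm_num, ?_⟩
  intro k hk
  set N := nPts C k with hNdef
  set d := minDeg C k with hddef
  have hkey : (N : ℝ) ≤ 2 * ((d : ℝ) + 1) ^ (8 : ℕ) := by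
    have := C.key_bound hk
    exact_mod_cast this
  have hd2 : (2 : ℝ) ≤ (d : ℝ) := by exact_mod_cast C.two_le_minDeg hk
  have hN1 : (1 : ℝ) ≤ (N : ℝ) := by
    have := C.four_le_nPts hk
    have : (4 : ℝ) ≤ (N : ℝ) := by exact_mod_cast this
    linarith
  have hNnn : (0 : ℝ) ≤ (N : ℝ) := by linarith
  have hd1nn : (0 : ℝ) ≤ (d : ℝ) + 1 := by linarith
  have step1 : (N : ℝ) ^ ε ≤ (N : ℝ) ^ (8⁻¹ : ℝ) :=
    Real.rpow_le_rpow_of_exponent_le hN1 (by linarith [hε1])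
  have step2 : (N : ℝ) ^ (8⁻¹ : ℝ) ≤ (2 * ((d : ℝ) + 1) ^ (8 : ℕ)) ^ (8⁻¹ : ℝ) :=
    Real.rpow_le_rpow hNnn hkey (by norm_num)
  have step3 : (2 * ((d : ℝ) + 1) ^ (8 : ℕ)) ^ (8⁻¹ : ℝ) =
      (2 : ℝ) ^ (8⁻¹ : ℝ) * ((d : ℝ) + 1) := by
    rw [Real.mul_rpow (by norm_num) (by positivity)]
    congr 1
    rw [← Real.rpow_natCast ((d : ℝ) + 1) 8, ← Real.rpow_mul hd1nn]
    norm_num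
  have step4 : (2 : ℝ) ^ (8⁻¹ : ℝ) ≤ 4 / 3 := by
    have h8 : ((2 : ℝ) ^ (8⁻¹ : ℝ)) ^ (8 : ℕ) = 2 := by
      rw [← Real.rpow_natCast ((2 : ℝ) ^ (8⁻¹ : ℝ)) 8, ← Real.rpow_mul (by norm_num)]
      norm_num
    apply le_of_pow_le_pow_left₀ (show (8 : ℕ) ≠ 0 by norm_num) (by norm_num : (0:ℝ) ≤ 4/3)
    rw [h8]; norm_num
  have hchain : (N : ℝ) ^ ε ≤ (2 : ℝ) ^ (8⁻¹ : ℝ) * ((d : ℝ) + 1) := by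
    rw [← step3]; exact le_trans step1 step2
  have h5 : (2 : ℝ) ^ (8⁻¹ : ℝ) * ((d : ℝ) + 1) ≤ (4 / 3) * ((d : ℝ) + 1) :=
    mul_le_mul_of_nonneg_right step4 hd1nn
  linarith
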